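/- For a subset A of the positive integers, if the asymptotic (natural) density d(A) = lim_{n→∞} |A ∩ {1,...,n}|/n exists, then the Dirichlet density ∂(A) = lim_{s→1+} (Σ_{n∈A} n^{-s})/ζ(s) exists and equals d(A). -/

import Mathlib

open Filter Topology Set

noncomputable def zeta (s : ℝ) : ℝ := ∑' n : ℕ+, (n : ℝ) ^ (-s)

def HasDDensity (A : Set ℕ+) (L : ℝ) : Prop :=
  Tendsto (fun s : ℝ => (∑' n : A, ((n : ℕ+) : ℝ) ^ (-s)) / zeta s) (𝓝[>] 1) (𝓝 L)

def HasDens (A : Set (ℕ+ × ℕ+)) (L : ℝ) : Prop :=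
  Tendsto (fun s : ℝ => (∑' p : A, (((p : ℕ+ × ℕ+).1 : ℝ) * ((p : ℕ+ × ℕ+).2 : ℝ)) ^ (-s)) / (zeta s) ^ 2)
    (𝓝[>] 1) (𝓝 L)

def HasNaturalDensity (A : Set ℕ+) (d : ℝ) : Prop :=
  Tendsto (fun n : ℕ => (Set.ncard {k : ℕ+ | k ∈ A ∧ (k : ℕ) ≤ n} : ℝ) / n) atTop (𝓝 d)

private lemma neg_s_ne_zero {s : ℝ} (hs : 1 < s) : -s ≠ 0 := by
  intro hc; have := neg_eq_zero.1 hc; linarith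

private lemma summable_rpow_neg {s : ℝ} (hs : 1 < s) :
    Summable (fun n : ℕ => (n : ℝ) ^ (-s)) :=
  Real.summable_nat_rpow.2 (by linarith)

private lemma zeta_eq {s : ℝ} (hs : 1 < s) : zeta s = ∑' n : ℕ, (n : ℝ) ^ (-s) := by
  unfold zeta
  refine Function.Injective.tsum_eq (g := PNat.val) (f := fun n : ℕ => (n:ℝ)^(-s))
    PNat.coe_injective ?_
  intro n hn
  rcases Nat.eq_zero_or_pos n with h | h
  · exfalso
    apply hn
    simp only [h, Nat.cast_zero]
    exact Real.zero_rpow (neg_s_ne_zero hs)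
  · exact ⟨⟨n, h⟩, rfl⟩

private lemma zeta_ge_one {s : ℝ} (hs : 1 < s) : 1 ≤ zeta s := by
  rw [zeta_eq hs]
  have h1 : ((1 : ℕ) : ℝ) ^ (-s) = 1 := by simp
  calc (1 : ℝ) = ((1 : ℕ) : ℝ) ^ (-s) := h1.symm
    _ ≤ ∑' n : ℕ, (n : ℝ) ^ (-s) :=
      Summable.le_tsum (summable_rpow_neg hs) 1 (fun j _ => Real.rpow_nonneg (Nat.cast_nonneg j) _)

private lemma zeta_tendsto : Tendsto zeta (𝓝[>] (1:ℝ)) atTop := by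
  rw [tendsto_atTop]
  intro b
  obtain ⟨N, hN⟩ :=
    (Real.tendsto_sum_range_one_div_nat_succ_atTop.eventually_ge_atTop (b + 1)).exists
  have hgc : Continuous (fun s : ℝ => ∑ i ∈ Finset.range N, ((i : ℝ) + 1) ^ (-s)) := by
    apply continuous_finset_sum
    intro i _
    have hp : (0:ℝ) < (i : ℝ) + 1 := by positivity
    have heq : (fun s : ℝ => ((i:ℝ)+1) ^ (-s))
        = fun s => Real.exp (Real.log ((i:ℝ)+1) * (-s)) := by
      funext s; exact Real.rpow_def_of_pos hp _
    rw [heq]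
    exact Real.continuous_exp.comp (continuous_const.mul continuous_neg)
  have hg1 : b + 1 ≤ ∑ i ∈ Finset.range N, ((i : ℝ) + 1) ^ (-(1:ℝ)) := by
    have heq : ∑ i ∈ Finset.range N, ((i : ℝ) + 1) ^ (-(1:ℝ))
        = ∑ i ∈ Finset.range N, 1 / ((i:ℝ) + 1) := by
      apply Finset.sum_congr rfl
      intro i _
      rw [Real.rpow_neg_one, one_div]
    rw [heq]; exact hN
  have hgs : Tendsto (fun s : ℝ => ∑ i ∈ Finset.range N, ((i : ℝ) + 1) ^ (-s)) (𝓝[>] (1:ℝ))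
      (𝓝 (∑ i ∈ Finset.range N, ((i : ℝ) + 1) ^ (-(1:ℝ)))) :=
    (hgc.continuousAt.tendsto).mono_left nhdsWithin_le_nhds
  have hev : ∀ᶠ s in 𝓝[>] (1:ℝ), b ≤ ∑ i ∈ Finset.range N, ((i : ℝ) + 1) ^ (-s) :=
    hgs.eventually (eventually_ge_nhds (by linarith))
  filter_upwards [hev, self_mem_nhdsWithin] with s hbs hs
  have hs1 : (1:ℝ) < s := hs
  refine le_trans hbs ?_
  rw [zeta_eq hs1]
  have h2 : ∑ i ∈ Finset.range N, ((i : ℝ) + 1) ^ (-s)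
      ≤ ∑ n ∈ Finset.range (N+1), (n:ℝ)^(-s) := by
    rw [Finset.sum_range_succ']
    have heq : ∑ i ∈ Finset.range N, (((i+1:ℕ)):ℝ)^(-s)
        = ∑ i ∈ Finset.range N, ((i : ℝ) + 1) ^ (-s) := by
      apply Finset.sum_congr rfl; intro i _; push_cast; ring_nf
    rw [heq]
    have h0 : (0:ℝ) ≤ ((0:ℕ):ℝ)^(-s) := Real.rpow_nonneg (by norm_num) _
    linarith
  exact le_trans h2 (Summable.sum_le_tsum _ (fun i _ => Real.rpow_nonneg (Nat.cast_nonneg _) _)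
    (summable_rpow_neg hs1))

private lemma tele (b : ℕ → ℝ) (n : ℕ) :
    ∑ i ∈ Finset.range n, ((i:ℝ)+1) * (b i - b (i+1))
      = (∑ i ∈ Finset.range n, b i) - n * b n := by
  induction n with
  | zero => simp
  | succ n ih =>
    rw [Finset.sum_range_succ, ih, Finset.sum_range_succ]
    push_cast
    ring

private lemma abel_bound {s : ℝ} (hs : 1 < s) (c : ℕ → ℝ) (hc0 : c 0 = 0) (K : ℝ)
    (hK : ∀ n, |c n| ≤ K) {ε M : ℝ} (hε : 0 ≤ ε) (hM : 0 ≤ M)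
    (hC : ∀ N : ℕ, |∑ n ∈ Finset.range N, c n| ≤ ε * N + M) :
    |∑' n : ℕ, c n * (n:ℝ) ^ (-s)| ≤ ε * (1 + ∑' n : ℕ, (n:ℝ) ^ (-s)) + M := by
  have hZsum := summable_rpow_neg hs
  set Z := ∑' n : ℕ, (n:ℝ) ^ (-s) with hZdef
  have hrnn : ∀ n : ℕ, 0 ≤ (n:ℝ) ^ (-s) := fun n => Real.rpow_nonneg (Nat.cast_nonneg _) _
  set b : ℕ → ℝ := fun n => if n = 0 then 1 else (n:ℝ) ^ (-s) with hbdef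
  have hb0 : b 0 = 1 := by simp [hbdef]
  have hbnn : ∀ n, 0 ≤ b n := by
    intro n
    by_cases hn : n = 0
    · simp [hbdef, hn]
    · simp only [hbdef, if_neg hn]; exact hrnn n
  have hbanti : ∀ n, b (n+1) ≤ b n := by
    intro n
    cases n with
    | zero => simp [hbdef]
    | succ m =>
      simp only [hbdef, if_neg (Nat.succ_ne_zero _), if_neg (Nat.succ_ne_zero _)]
      apply Real.rpow_le_rpow_of_nonpos
      · push_cast; linarith
      · push_cast; linarith
      · linarith
  have hble1 : ∀ n : ℕ, n ≠ 0 → b n = (n:ℝ)^(-s) := fun n hn => by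
    simp only [hbdef, if_neg hn]
  have hcbeq : ∀ n, c n * (n:ℝ)^(-s) = c n * b n := by
    intro n
    by_cases hn : n = 0
    · subst hn; rw [hc0]; ring
    · rw [hble1 n hn]
  -- summability
  have hsum : Summable (fun n : ℕ => c n * (n:ℝ)^(-s)) := by
    apply Summable.of_norm_bounded (hZsum.mul_left K)
    intro n
    rw [Real.norm_eq_abs, abs_mul, abs_of_nonneg (hrnn n)]
    exact mul_le_mul_of_nonneg_right (hK n) (hrnn n)
  set T := ∑' n : ℕ, c n * (n:ℝ)^(-s) with hTdef
  have hPS : Tendsto (fun N => ∑ n ∈ Finset.range N, c n * (n:ℝ)^(-s)) atTop (𝓝 T) :=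
    hsum.hasSum.tendsto_sum_nat
  have hPS2 : Tendsto (fun N : ℕ => |∑ n ∈ Finset.range (N+2), c n * (n:ℝ)^(-s)|) atTop
      (𝓝 |T|) :=
    (hPS.comp (tendsto_add_atTop_nat 2)).abs
  -- partial sum bound
  have hbsum : ∀ m : ℕ, ∑ i ∈ Finset.range m, b i ≤ 1 + Z := by
    intro m
    have h1 : ∀ i ∈ Finset.range m, b i ≤ (if i = 0 then (1:ℝ) else 0) + (i:ℝ)^(-s) := by
      intro i _
      by_cases hi : i = 0
      · subst hi
        simp only [if_pos]
        have : ((0:ℕ):ℝ)^(-s) = 0 := by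
          simp [Real.zero_rpow (neg_s_ne_zero hs)]
        rw [hb0, this]; norm_num
      · rw [hble1 i hi, if_neg hi]; linarith
    calc ∑ i ∈ Finset.range m, b i
        ≤ ∑ i ∈ Finset.range m, ((if i = 0 then (1:ℝ) else 0) + (i:ℝ)^(-s)) :=
          Finset.sum_le_sum h1
      _ = (∑ i ∈ Finset.range m, (if i = 0 then (1:ℝ) else 0))
          + ∑ i ∈ Finset.range m, (i:ℝ)^(-s) := Finset.sum_add_distrib
      _ ≤ 1 + Z := by
          apply add_le_add
          · rw [Finset.sum_ite_eq' (Finset.range m) 0 (fun _ => (1:ℝ))]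
            split <;> norm_num
          · exact Summable.sum_le_tsum _ (fun i _ => hrnn i) hZsum
  have hbound : ∀ N : ℕ, |∑ n ∈ Finset.range (N+2), c n * (n:ℝ)^(-s)|
      ≤ (ε*(N+2) + M) * b (N+1) + (ε * (1 + Z) + M) := by
    intro N
    have hre : ∀ n, c n * (n:ℝ)^(-s) = b n * c n := by
      intro n; rw [hcbeq n]; ring
    simp only [hre]
    rw [show ∑ n ∈ Finset.range (N+2), b n * c n
        = ∑ n ∈ Finset.range (N+2), b n • c n from rfl]
    rw [Finset.sum_range_by_parts b c (N+2)]
    have hsub : (N + 2 : ℕ) - 1 = N + 1 := rfl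
    rw [hsub]
    simp only [smul_eq_mul]
    have habs : |b (N+1) * (∑ i ∈ Finset.range (N+2), c i)
        - ∑ i ∈ Finset.range (N+1), (b (i+1) - b i) * (∑ j ∈ Finset.range (i+1), c j)|
        ≤ b (N+1) * |∑ i ∈ Finset.range (N+2), c i|
          + ∑ i ∈ Finset.range (N+1), (b i - b (i+1)) * |∑ j ∈ Finset.range (i+1), c j| := by
      refine le_trans (abs_sub _ _) ?_
      apply add_le_add
      · rw [abs_mul, abs_of_nonneg (hbnn _)]
      · refine le_trans (Finset.abs_sum_le_sum_abs _ _) ?_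
        apply Finset.sum_le_sum
        intro i _
        rw [abs_mul, abs_sub_comm, abs_of_nonneg (by linarith [hbanti i] : 0 ≤ b i - b (i+1))]
    refine le_trans habs ?_
    have h1 : b (N+1) * |∑ i ∈ Finset.range (N+2), c i| ≤ (ε*(N+2) + M) * b (N+1) := by
      rw [mul_comm]
      apply mul_le_mul_of_nonneg_right _ (hbnn _)
      have := hC (N+2); push_cast at this ⊢; linarith
    have h2 : ∑ i ∈ Finset.range (N+1), (b i - b (i+1)) * |∑ j ∈ Finset.range (i+1), c j|
        ≤ ε * (1 + Z) + M := by
      have hterm : ∀ i ∈ Finset.range (N+1), (b i - b (i+1)) * |∑ j ∈ Finset.range (i+1), c j|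
          ≤ ε * (((i:ℝ)+1) * (b i - b (i+1))) + M * (b i - b (i+1)) := by
        intro i _
        have hnn : 0 ≤ b i - b (i+1) := by linarith [hbanti i]
        have := hC (i+1)
        push_cast at this
        nlinarith [abs_nonneg (∑ j ∈ Finset.range (i+1), c j)]
      refine le_trans (Finset.sum_le_sum hterm) ?_
      rw [Finset.sum_add_distrib, ← Finset.mul_sum, ← Finset.mul_sum]
      have ht1 : ∑ i ∈ Finset.range (N+1), ((i:ℝ)+1) * (b i - b (i+1)) ≤ 1 + Z := by
        rw [tele b (N+1)]
        have : 0 ≤ ((N+1 : ℕ):ℝ) * b (N+1) := by positivity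
        have := hbsum (N+1)
        push_cast at *
        linarith
      have ht2 : ∑ i ∈ Finset.range (N+1), (b i - b (i+1)) ≤ 1 := by
        rw [Finset.sum_range_sub' b (N+1), hb0]
        linarith [hbnn (N+1)]
      have hZnn : 0 ≤ Z := tsum_nonneg hrnn
      nlinarith
    linarith
  -- limit of RHS
  have hRHS : Tendsto (fun N : ℕ => (ε*(N+2) + M) * b (N+1) + (ε * (1 + Z) + M)) atTop
      (𝓝 (0 + (ε * (1 + Z) + M))) := by
    apply Tendsto.add_const
    have hb1 : ∀ N : ℕ, (ε*(N+2) + M) * b (N+1) ≤ (2*ε + M) * ((N:ℝ)+1) ^ (-(s-1)) := by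
      intro N
      have hx : (0:ℝ) < (N:ℝ)+1 := by positivity
      have hbv : b (N+1) = ((N:ℝ)+1) ^ (-s) := by
        rw [hble1 (N+1) (Nat.succ_ne_zero N)]
        push_cast; ring_nf
      rw [hbv]
      have hc1 : ε*(N+2) + M ≤ (2*ε + M) * ((N:ℝ)+1) := by nlinarith [Nat.cast_nonneg (α := ℝ) N]
      have : (2*ε + M) * ((N:ℝ)+1) * (((N:ℝ)+1) ^ (-s)) = (2*ε + M) * ((N:ℝ)+1) ^ (-(s-1)) := by
        rw [mul_assoc]
        congr 1
        rw [show -(s-1) = 1 + (-s) by ring, Real.rpow_add hx, Real.rpow_one]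
      rw [← this]
      exact mul_le_mul_of_nonneg_right hc1 (Real.rpow_nonneg (le_of_lt hx) _)
    have hb2 : Tendsto (fun N : ℕ => (2*ε + M) * ((N:ℝ)+1) ^ (-(s-1))) atTop (𝓝 ((2*ε+M) * 0)) := by
      apply Tendsto.const_mul
      exact (tendsto_rpow_neg_atTop (by linarith : (0:ℝ) < s - 1)).comp
        (tendsto_atTop_add_const_right atTop 1 tendsto_natCast_atTop_atTop)
    rw [mul_zero] at hb2
    apply squeeze_zero (fun N => ?_) hb1 hb2
    have : 0 ≤ ε*(N:ℝ)+2*ε := by positivity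
    have := hbnn (N+1)
    nlinarith [hbnn (N+1), Nat.cast_nonneg (α := ℝ) N]
  rw [zero_add] at hRHS
  exact le_of_tendsto_of_tendsto' hPS2 hRHS hbound

theorem stmt0 (A : Set ℕ+) (d : ℝ) (h : HasNaturalDensity A d) :
    HasDDensity A d := by
  classical
  set B : Set ℕ := (fun k : ℕ+ => (k:ℕ)) '' A with hB
  set χ : ℕ → ℝ := B.indicator (fun _ => 1) with hχ
  have hχ0 : χ 0 = 0 := by
    apply Set.indicator_of_notMem
    rintro ⟨k, -, hk⟩
    exact k.pos.ne' hk
  have hχnn : ∀ n, 0 ≤ χ n := fun n => Set.indicator_nonneg (fun _ _ => zero_le_one) n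
  have hχle : ∀ n, χ n ≤ 1 := by
    intro n
    by_cases hn : n ∈ B
    · rw [hχ, Set.indicator_of_mem hn]
    · rw [hχ, Set.indicator_of_notMem hn]; norm_num
  have hχk : ∀ k : ℕ+, χ (k:ℕ) = if k ∈ A then 1 else 0 := by
    intro k
    by_cases hk : k ∈ A
    · rw [hχ, Set.indicator_of_mem (show (k:ℕ) ∈ B from ⟨k, hk, rfl⟩), if_pos hk]
    · rw [hχ, Set.indicator_of_notMem, if_neg hk]
      rintro ⟨k', hk', hkk⟩
      exact hk ((PNat.coe_injective hkk) ▸ hk')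
  -- counting
  have hcount : ∀ N : ℕ, ∑ n ∈ Finset.range (N+1), χ n
      = (Set.ncard {k : ℕ+ | k ∈ A ∧ (k:ℕ) ≤ N} : ℝ) := by
    intro N
    have h1 : ∑ n ∈ Finset.range (N+1), χ n
        = (((Finset.range (N+1)).filter (· ∈ B)).card : ℝ) := by
      have he : ∀ n ∈ Finset.range (N+1), χ n = if n ∈ B then (1:ℝ) else 0 := by
        intro n _
        rw [hχ, Set.indicator_apply]
      rw [Finset.sum_congr rfl he, ← Finset.sum_filter, Finset.sum_const, nsmul_eq_mul, mul_one]
    have h2 : ((fun k : ℕ+ => (k:ℕ)) '' {k : ℕ+ | k ∈ A ∧ (k:ℕ) ≤ N} : Set ℕ)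
        = ↑((Finset.range (N+1)).filter (· ∈ B)) := by
      ext n
      simp only [Set.mem_image, Set.mem_setOf_eq, Finset.coe_filter, Finset.mem_range,
        Nat.lt_succ_iff]
      constructor
      · rintro ⟨k, ⟨hkA, hkN⟩, rfl⟩
        exact ⟨hkN, ⟨k, hkA, rfl⟩⟩
      · rintro ⟨hnN, ⟨k, hkA, rfl⟩⟩
        exact ⟨k, ⟨hkA, hnN⟩, rfl⟩
    rw [h1]
    have h3 : {k : ℕ+ | k ∈ A ∧ (k:ℕ) ≤ N}.ncard
        = ((Finset.range (N+1)).filter (· ∈ B)).card := by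
      rw [← Set.ncard_image_of_injective {k : ℕ+ | k ∈ A ∧ (k:ℕ) ≤ N} PNat.coe_injective,
        h2, Set.ncard_coe_finset]
    rw [h3]
  -- density in terms of sums
  have hdens : Tendsto (fun n : ℕ => (∑ m ∈ Finset.range (n+1), χ m) / n) atTop (𝓝 d) := by
    have : (fun n : ℕ => (∑ m ∈ Finset.range (n+1), χ m) / n)
        = fun n : ℕ => (Set.ncard {k : ℕ+ | k ∈ A ∧ (k:ℕ) ≤ n} : ℝ) / n := by
      funext n; rw [hcount n]
    rw [this]
    exact h
  -- rewriting the Dirichlet series over A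
  have hSeq : ∀ s : ℝ, 1 < s →
      (∑' n : A, ((n : ℕ+) : ℝ) ^ (-s)) = ∑' n : ℕ, χ n * (n:ℝ) ^ (-s) := by
    intro s hs
    have e1 : (∑' n : A, ((n : ℕ+) : ℝ) ^ (-s))
        = ∑' k : ℕ+, A.indicator (fun k : ℕ+ => ((k:ℕ+):ℝ) ^ (-s)) k :=
      tsum_subtype A (fun k : ℕ+ => ((k:ℕ+):ℝ) ^ (-s))
    rw [e1]
    have e2 : ∀ k : ℕ+, A.indicator (fun k : ℕ+ => ((k:ℕ+):ℝ) ^ (-s)) k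
        = χ (k:ℕ) * ((k:ℕ):ℝ) ^ (-s) := by
      intro k
      rw [hχk k]
      by_cases hk : k ∈ A
      · rw [Set.indicator_of_mem hk, if_pos hk, one_mul]
      · rw [Set.indicator_of_notMem hk, if_neg hk, zero_mul]
    rw [tsum_congr e2]
    refine Function.Injective.tsum_eq (g := PNat.val) (f := fun n : ℕ => χ n * (n:ℝ)^(-s))
      PNat.coe_injective ?_
    intro n hn
    rcases Nat.eq_zero_or_pos n with h0 | h0
    · exfalso
      apply hn
      simp only [h0, hχ0, zero_mul]
    · exact ⟨⟨n, h0⟩, rfl⟩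
  -- the key uniform estimate
  have key : ∀ ε : ℝ, 0 < ε → ∃ M : ℝ, 0 ≤ M ∧ ∀ s : ℝ, 1 < s →
      |(∑' n : A, ((n : ℕ+) : ℝ) ^ (-s)) - d * zeta s| ≤ ε * (1 + zeta s) + M := by
    intro ε hε
    obtain ⟨N1, hN1⟩ := (Metric.tendsto_nhds.1 hdens ε hε).exists_forall_of_atTop
    set N0 : ℕ := N1 + 1 with hN0def
    have hN0 : ∀ n : ℕ, N0 ≤ n → |(∑ m ∈ Finset.range (n+1), χ m) - d * n| ≤ ε * n := by
      intro n hn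
      have hn1 : 1 ≤ n := le_trans (by omega) hn
      have hnR : (0:ℝ) < n := by exact_mod_cast hn1
      have hd := hN1 n (by omega)
      rw [Real.dist_eq] at hd
      have heq : (∑ m ∈ Finset.range (n+1), χ m) - d * n
          = ((∑ m ∈ Finset.range (n+1), χ m) / n - d) * n := by
        field_simp
      rw [heq, abs_mul, abs_of_pos hnR]
      exact mul_le_mul_of_nonneg_right (le_of_lt hd) (le_of_lt hnR)
    set M : ℝ := (1 + |d|) * (N0 + 1) with hMdef
    have hMnn : 0 ≤ M := by positivity
    refine ⟨M, hMnn, ?_⟩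
    intro s hs
    set c : ℕ → ℝ := fun n => χ n - (if n = 0 then 0 else d) with hcdef
    have hc0 : c 0 = 0 := by simp [hcdef, hχ0]
    have hK : ∀ n, |c n| ≤ 1 + |d| := by
      intro n
      by_cases hn : n = 0
      · simp [hcdef, hn, hχ0]; positivity
      · simp only [hcdef, if_neg hn]
        refine le_trans (abs_sub _ _) ?_
        have := hχnn n
        have := hχle n
        have : |χ n| ≤ 1 := by rw [abs_of_nonneg (hχnn n)]; exact hχle n
        linarith
    -- partial sums of c
    have hCsum : ∀ N : ℕ, ∑ n ∈ Finset.range (N+1), c n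
        = (∑ m ∈ Finset.range (N+1), χ m) - d * N := by
      intro N
      rw [hcdef]
      rw [Finset.sum_sub_distrib]
      congr 1
      have : ∀ n : ℕ, (if n = 0 then (0:ℝ) else d) = d - (if n = 0 then d else 0) := by
        intro n; split <;> ring
      rw [Finset.sum_congr rfl (fun n _ => this n), Finset.sum_sub_distrib,
        Finset.sum_const, Finset.sum_ite_eq' (Finset.range (N+1)) 0 (fun _ => d)]
      simp only [Finset.mem_range, Nat.succ_pos, if_pos (Nat.succ_pos N), Finset.card_range]
      push_cast
      ring
    have haRnn : ∀ N : ℕ, 0 ≤ ∑ m ∈ Finset.range (N+1), χ m :=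
      fun N => Finset.sum_nonneg (fun m _ => hχnn m)
    have haRle : ∀ N : ℕ, ∑ m ∈ Finset.range (N+1), χ m ≤ N := by
      intro N
      have h1 : ∀ m ∈ Finset.range (N+1), χ m ≤ (if m = 0 then (0:ℝ) else 1) := by
        intro m _
        by_cases hm : m = 0
        · simp [hm, hχ0]
        · rw [if_neg hm]; exact hχle m
      refine le_trans (Finset.sum_le_sum h1) ?_
      have : ∀ m : ℕ, (if m = 0 then (0:ℝ) else 1) = 1 - (if m = 0 then 1 else 0) := by
        intro m; split <;> ring
      rw [Finset.sum_congr rfl (fun m _ => this m), Finset.sum_sub_distrib,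
        Finset.sum_const, Finset.sum_ite_eq' (Finset.range (N+1)) 0 (fun _ => (1:ℝ))]
      simp only [Finset.mem_range, if_pos (Nat.succ_pos N), Finset.card_range,
        nsmul_eq_mul, mul_one]
      push_cast
      linarith
    have hC : ∀ N : ℕ, |∑ n ∈ Finset.range N, c n| ≤ ε * N + M := by
      intro N
      cases N with
      | zero => simp [hMnn]
      | succ m =>
        rw [hCsum m]
        by_cases hm : N0 ≤ m
        · have := hN0 m hm
          have hmc : (m:ℝ) ≤ (m+1:ℕ) := by push_cast; linarith
          have hεm : ε * (m:ℝ) ≤ ε * ((m+1:ℕ):ℝ) := by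
            apply mul_le_mul_of_nonneg_left _ (le_of_lt hε)
            push_cast; linarith
          linarith
        · push_neg at hm
          have h1 : |(∑ k ∈ Finset.range (m+1), χ k) - d * m| ≤ (1 + |d|) * m := by
            refine le_trans (abs_sub _ _) ?_
            have h2 : |∑ k ∈ Finset.range (m+1), χ k| ≤ (m:ℝ) := by
              rw [abs_of_nonneg (haRnn m)]; exact haRle m
            have h3 : |d * (m:ℝ)| = |d| * m := by
              rw [abs_mul, Nat.abs_cast]
            nlinarith [Nat.cast_nonneg (α := ℝ) m]
          have h4 : (1 + |d|) * (m:ℝ) ≤ M := by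
            rw [hMdef]
            have : (m:ℝ) ≤ (N0:ℝ) + 1 := by
              have : (m:ℝ) < N0 := by exact_mod_cast hm
              linarith
            nlinarith [abs_nonneg d]
          have h5 : 0 ≤ ε * ((m+1:ℕ):ℝ) := by positivity
          linarith
    have hab := abel_bound hs c hc0 (1 + |d|) hK (le_of_lt hε) hMnn hC
    -- identify the tsum
    have hZsum := summable_rpow_neg hs
    have hrnn : ∀ n : ℕ, 0 ≤ (n:ℝ) ^ (-s) := fun n => Real.rpow_nonneg (Nat.cast_nonneg _) _
    have hsum1 : Summable (fun n : ℕ => χ n * (n:ℝ)^(-s)) := by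
      apply Summable.of_norm_bounded hZsum
      intro n
      rw [Real.norm_eq_abs, abs_mul, abs_of_nonneg (hχnn n), abs_of_nonneg (hrnn n)]
      nlinarith [hχle n, hχnn n, hrnn n]
    have hzr : ((0:ℕ):ℝ) ^ (-s) = 0 := by
      simp [Real.zero_rpow (neg_s_ne_zero hs)]
    have hceq : (fun n : ℕ => c n * (n:ℝ)^(-s))
        = fun n : ℕ => χ n * (n:ℝ)^(-s) - d * (n:ℝ)^(-s) := by
      funext n
      by_cases hn : n = 0
      · subst hn; rw [hzr]; simp [hcdef]
      · simp only [hcdef, if_neg hn]; ring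
    have htsum : ∑' n : ℕ, c n * (n:ℝ)^(-s)
        = (∑' n : A, ((n : ℕ+) : ℝ) ^ (-s)) - d * zeta s := by
      rw [hceq, Summable.tsum_sub hsum1 (hZsum.mul_left d), tsum_mul_left, ← zeta_eq hs, hSeq s hs]
    rw [htsum, ← zeta_eq hs] at hab
    exact hab
  -- final assembly
  rw [HasDDensity, Metric.tendsto_nhds]
  intro ε hε
  obtain ⟨M, hMnn, hbd⟩ := key (ε/4) (by positivity)
  have hev1 : ∀ᶠ s in 𝓝[>] (1:ℝ), max 1 ((M + ε/4) / (ε/4)) ≤ zeta s :=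
    zeta_tendsto.eventually_ge_atTop _
  filter_upwards [hev1, self_mem_nhdsWithin] with s hsz hsmem
  have hs1 : (1:ℝ) < s := hsmem
  have hz1 : 1 ≤ zeta s := le_trans (le_max_left _ _) hsz
  have hzpos : 0 < zeta s := lt_of_lt_of_le one_pos hz1
  have hz2 : M + ε/4 ≤ ε/4 * zeta s := by
    have := le_trans (le_max_right _ _) hsz
    rw [div_le_iff₀ (by positivity : (0:ℝ) < ε/4)] at this
    linarith
  have hnum := hbd s hs1
  rw [Real.dist_eq]
  have heq2 : (∑' n : A, ((n : ℕ+) : ℝ) ^ (-s)) / zeta s - d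
      = ((∑' n : A, ((n : ℕ+) : ℝ) ^ (-s)) - d * zeta s) / zeta s := by
    field_simp
  rw [heq2, abs_div, abs_of_pos hzpos, div_lt_iff₀ hzpos]
  nlinarith
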